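/- If a tree T on kn vertices can be split into k components each of size n by removing k-1 edges, then an edge e of T belongs to the unique splitting set F if and only if removing e alone from T leaves two components whose sizes are both multiples of n. -/

import Mathlib

open SimpleGraph

/-- If every connected component of `G` has `n` vertices, then any set `S` which is
closed under `G`-reachability has cardinality divisible by `n`. -/
lemma closed_ncard_dvd_aux {V : Type*} [Fintype V] (G : SimpleGraph V) (n : ℕ)
    (hn : ∀ d : G.ConnectedComponent, d.supp.ncard = n)
    (S : Set V) (hS : ∀ x ∈ S, ∀ y, G.Reachable x y → y ∈ S) :
    n ∣ S.ncard := by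
  classical
  have : Fintype G.ConnectedComponent := Fintype.ofFinite _
  set D : Finset G.ConnectedComponent := Finset.univ.filter (fun d => d.supp ⊆ S) with hD
  have hunion : S.toFinset = D.biUnion (fun d => d.supp.toFinset) := by
    ext x
    simp only [Set.mem_toFinset, Finset.mem_biUnion, hD, Finset.mem_filter, Finset.mem_univ,
      true_and]
    constructor
    · intro hx
      refine ⟨G.connectedComponentMk x, ?_, by simp [ConnectedComponent.mem_supp_iff]⟩
      intro y hy
      rw [ConnectedComponent.mem_supp_iff, ConnectedComponent.eq] at hy
      exact hS x hx y hy.symm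
    · rintro ⟨d, hd, hx⟩
      exact hd hx
  have hcard : S.ncard = D.card * n := by
    rw [Set.ncard_eq_toFinset_card', hunion, Finset.card_biUnion ?_]
    · rw [Finset.sum_congr rfl (fun d _ => ?_), Finset.sum_const, smul_eq_mul]
      rw [← Set.ncard_eq_toFinset_card', hn d]
    · intro a _ b _ hab
      simp only [Finset.disjoint_left, Set.mem_toFinset]
      intro x hxa hxb
      rw [ConnectedComponent.mem_supp_iff] at hxa hxb
      exact hab (hxa.symm.trans hxb)
  exact hcard ▸ dvd_mul_left n D.card

/-- If a tree `T` on `k*n` vertices is split into `k` components of size `n`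
by removing the (unique) set `F` of `k-1` edges, then an edge `e` of `T` belongs to `F`
if and only if removing `e` alone from `T` leaves components whose sizes are all
multiples of `n` (i.e. the two pieces have sizes that are multiples of `n`). -/
theorem mem_splitting_set_iff {V : Type*} [Fintype V] (k n : ℕ) (hk : 0 < k) (hn : 0 < n)
    (T : SimpleGraph V) (hT : T.IsTree) (hV : Fintype.card V = k * n)
    (F : Finset (Sym2 V))
    (hFe : ↑F ⊆ T.edgeSet) (hFc : F.card = k - 1)
    (hFk : Nat.card (T.deleteEdges ↑F).ConnectedComponent = k)
    (hFn : ∀ c : (T.deleteEdges ↑F).ConnectedComponent, c.supp.ncard = n)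
    (e : Sym2 V) (he : e ∈ T.edgeSet) :
    e ∈ F ↔ ∀ c : (T.deleteEdges {e}).ConnectedComponent, n ∣ c.supp.ncard := by
  classical
  revert he
  induction e using Sym2.ind with
  | _ u v =>
  intro he
  constructor
  · -- forward direction: e ∈ F implies all components of T - e have size divisible by n
    intro heF c
    have hle : T.deleteEdges ↑F ≤ T.deleteEdges {s(u, v)} :=
      deleteEdges_anti (by simpa using heF)
    apply closed_ncard_dvd_aux _ n hFn
    intro x hx y hxy
    rw [ConnectedComponent.mem_supp_iff] at hx ⊢
    exact (ConnectedComponent.sound (hxy.mono hle)).symm.trans hx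
  · -- backward direction
    intro hdvd
    by_contra heF
    have huv : T.Adj u v := he
    set G := T.deleteEdges (↑F : Set (Sym2 V)) with hGdef
    set H := T.deleteEdges ({s(u, v)} : Set (Sym2 V)) with hHdef
    have hGuv : G.Adj u v := by
      rw [hGdef, deleteEdges_adj]
      exact ⟨huv, by simpa using heF⟩
    set c₀ : G.ConnectedComponent := G.connectedComponentMk u with hc₀
    set A : H.ConnectedComponent := H.connectedComponentMk u with hA
    set B : H.ConnectedComponent := H.connectedComponentMk v with hB
    -- e is a bridge of the tree, so A ≠ B
    have hbridge : ¬ H.Reachable u v := by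
      have := (isAcyclic_iff_forall_edge_isBridge.mp hT.IsAcyclic) he
      rw [isBridge_iff] at this
      exact this
    have hAB : A ≠ B := fun h => hbridge (ConnectedComponent.exact h)
    -- a G-reachability step from a vertex outside c₀ stays within the same H-component
    have key : ∀ (x y : V), x ∉ c₀.supp → G.Reachable x y →
        y ∉ c₀.supp ∧ H.Reachable x y := by
      intro x y hx hxy
      obtain ⟨p⟩ := hxy
      have hxc : G.connectedComponentMk x ≠ c₀ := by
        rwa [ConnectedComponent.mem_supp_iff] at hx
      have hnotmem : s(u, v) ∉ p.edges := by
        intro hmem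
        have hu : u ∈ p.support := p.fst_mem_support_of_mem_edges hmem
        have : G.Reachable x u := ⟨p.takeUntil u hu⟩
        exact hxc (ConnectedComponent.sound this)
      have hedges : ∀ f ∈ p.edges, f ∈ H.edgeSet := by
        intro f hf
        have hfG : f ∈ G.edgeSet := p.edges_subset_edgeSet hf
        rw [hGdef, edgeSet_deleteEdges] at hfG
        rw [hHdef, edgeSet_deleteEdges]
        refine ⟨hfG.1, ?_⟩
        simp only [Set.mem_singleton_iff]
        rintro rfl
        exact hnotmem hf
      refine ⟨?_, ⟨p.transfer H hedges⟩⟩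
      rw [ConnectedComponent.mem_supp_iff]
      intro hyc
      exact hxc ((ConnectedComponent.sound ⟨p⟩).trans hyc)
    -- for every H-component c, the set c.supp \ c₀.supp is G-closed
    have hclosed : ∀ c : H.ConnectedComponent, n ∣ (c.supp \ c₀.supp).ncard := by
      intro c
      apply closed_ncard_dvd_aux _ n hFn
      rintro x ⟨hxc, hxc₀⟩ y hxy
      obtain ⟨hyc₀, hHxy⟩ := key x y hxc₀ hxy
      refine ⟨?_, hyc₀⟩
      rw [ConnectedComponent.mem_supp_iff] at hxc ⊢
      exact (ConnectedComponent.sound hHxy).symm.trans hxc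
    -- hence n divides |c.supp ∩ c₀.supp| for every H-component c
    have hinter : ∀ c : H.ConnectedComponent, n ∣ (c.supp ∩ c₀.supp).ncard := by
      intro c
      have h1 : (c.supp ∩ c₀.supp).ncard + (c.supp \ c₀.supp).ncard = c.supp.ncard :=
        Set.ncard_inter_add_ncard_diff_eq_ncard c.supp c₀.supp (Set.toFinite _)
      have h2 := hdvd c
      have h3 := hclosed c
      have h4 : (c.supp ∩ c₀.supp).ncard = c.supp.ncard - (c.supp \ c₀.supp).ncard := by omega
      rw [h4]
      exact Nat.dvd_sub h2 h3
    -- u ∈ A.supp ∩ c₀.supp and v ∈ B.supp ∩ c₀.supp give lower bounds n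
    have hu_mem : u ∈ A.supp ∩ c₀.supp := ⟨rfl, rfl⟩
    have hv_mem : v ∈ B.supp ∩ c₀.supp := by
      refine ⟨rfl, ?_⟩
      rw [ConnectedComponent.mem_supp_iff]
      exact (ConnectedComponent.sound hGuv.reachable).symm
    have hA_ge : n ≤ (A.supp ∩ c₀.supp).ncard := by
      refine Nat.le_of_dvd ?_ (hinter A)
      rw [Set.ncard_pos (Set.toFinite _)]
      exact ⟨u, hu_mem⟩
    have hB_ge : n ≤ (B.supp ∩ c₀.supp).ncard := by
      refine Nat.le_of_dvd ?_ (hinter B)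
      rw [Set.ncard_pos (Set.toFinite _)]
      exact ⟨v, hv_mem⟩
    -- but these are disjoint subsets of c₀.supp which has size n; contradiction
    have hdisj : Disjoint (A.supp ∩ c₀.supp) (B.supp ∩ c₀.supp) := by
      rw [Set.disjoint_left]
      rintro x ⟨hxA, -⟩ ⟨hxB, -⟩
      rw [ConnectedComponent.mem_supp_iff] at hxA hxB
      exact hAB (hxA.symm.trans hxB)
    have hsub : (A.supp ∩ c₀.supp) ∪ (B.supp ∩ c₀.supp) ⊆ c₀.supp := by
      rintro x (⟨-, h⟩ | ⟨-, h⟩) <;> exact h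
    have hbound : (A.supp ∩ c₀.supp).ncard + (B.supp ∩ c₀.supp).ncard ≤ n := by
      rw [← Set.ncard_union_eq hdisj (Set.toFinite _) (Set.toFinite _), ← hFn c₀]
      exact Set.ncard_le_ncard hsub (Set.toFinite _)
    omega
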